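/- Let M = S¹ × ℝ, where S¹ is the unit circle in ℂ. Then there do not exist a topological space N, points b ∈ M and r ∈ N, a function f : M → N, and a continuous map φ : M × M × N → M × M × N homotopic to the identity map of M × M × N with φ(x, b, r) = (x, x, f x) for all x ∈ M. -/

import Mathlib

open Complex Real unitInterval

private lemma re_div_pos {a b : ℂ} (ha : ‖a‖ = 1) (hb : ‖b‖ = 1) (hd : dist a b < 1) :
    0 < (a / b).re := by
  have hns : Complex.normSq b = 1 := by
    rw [← Complex.sq_norm, hb]; norm_num
  have h2 : Complex.normSq (a - b) < 1 := by
    have h3 : ‖a - b‖ < 1 := by rwa [Complex.dist_eq] at hd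
    have h4 : (0:ℝ) ≤ ‖a - b‖ := norm_nonneg _
    nlinarith [Complex.sq_norm (a - b)]
  have ha' : a.re ^ 2 + a.im ^ 2 = 1 := by
    have := Complex.sq_norm a
    rw [ha] at this
    rw [Complex.normSq_apply] at this; nlinarith
  have hb' : b.re ^ 2 + b.im ^ 2 = 1 := by
    have := Complex.sq_norm b
    rw [hb] at this
    rw [Complex.normSq_apply] at this; nlinarith
  rw [Complex.normSq_apply] at h2
  simp only [Complex.sub_re, Complex.sub_im] at h2
  rw [Complex.div_re, hns]
  nlinarith

private lemma no_circle_contraction (c : Metric.sphere (0 : ℂ) 1)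
    (H : C(unitInterval × (Metric.sphere (0 : ℂ) 1), Metric.sphere (0 : ℂ) 1))
    (h0 : ∀ s, H (0, s) = c) (h1 : ∀ s, H (1, s) = s) : False := by
  have hnorm : ∀ p, ‖(H p : ℂ)‖ = 1 := fun p => mem_sphere_zero_iff_norm.mp (H p).2
  have hne : ∀ p, (H p : ℂ) ≠ 0 := fun p => by
    intro h; have := hnorm p; rw [h] at this; simp at this
  -- uniform continuity
  have hc : Continuous fun p : unitInterval × (Metric.sphere (0 : ℂ) 1) => (H p : ℂ) :=
    continuous_subtype_val.comp H.continuous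
  have huc : UniformContinuous fun p : unitInterval × (Metric.sphere (0 : ℂ) 1) => (H p : ℂ) :=
    CompactSpace.uniformContinuous_of_continuous hc
  obtain ⟨δ, hδpos, hδ⟩ := Metric.uniformContinuous_iff.mp huc 1 one_pos
  obtain ⟨n, hn⟩ := exists_nat_one_div_lt hδpos
  set N : ℕ := n + 1 with hN
  have hNpos : (0:ℝ) < N := by positivity
  -- partition points
  have umem : ∀ i : ℕ, min ((i:ℝ) / N) 1 ∈ unitInterval :=
    fun i => ⟨le_min (by positivity) zero_le_one, min_le_right _ _⟩
  set u : ℕ → unitInterval := fun i => ⟨min ((i:ℝ) / N) 1, umem i⟩ with hu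
  have huval : ∀ i : ℕ, i ≤ N → ((u i : ℝ)) = (i:ℝ) / N := by
    intro i hi
    simp only [hu]
    exact min_eq_left (by rw [div_le_one hNpos]; exact_mod_cast hi)
  have hu0 : u 0 = 0 := by ext; simp [hu]
  have huN : u N = 1 := by
    ext; rw [huval N le_rfl, div_self (ne_of_gt hNpos)]; rfl
  -- adjacent values are close
  have hclose : ∀ (i : ℕ), i < N → ∀ x, dist (H (u (i+1), x) : ℂ) (H (u i, x) : ℂ) < 1 := by
    intro i hi x
    apply hδ
    rw [Prod.dist_eq, dist_self x]
    have hlt : dist (u (i+1)) (u i) < δ := by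
      rw [Subtype.dist_eq, huval (i+1) hi, huval i (le_of_lt hi), Real.dist_eq]
      have heq : ((i+1 : ℕ):ℝ) / N - (i:ℝ) / N = 1 / N := by push_cast; field_simp; ring
      rw [heq, abs_of_pos (by positivity), hN]
      push_cast
      exact hn
    calc max (dist (u (i+1)) (u i)) 0 = dist (u (i+1)) (u i) := max_eq_left dist_nonneg
      _ < δ := hlt
  -- the ratio function and continuous argument sum (a continuous logarithm)
  set rat : ℕ → (Metric.sphere (0:ℂ) 1) → ℂ :=
    fun i x => (H (u (i+1), x) : ℂ) / (H (u i, x) : ℂ) with hrat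
  have hratre : ∀ i, i < N → ∀ x, 0 < (rat i x).re := fun i hi x =>
    re_div_pos (hnorm _) (hnorm _) (hclose i hi x)
  have hratnorm : ∀ i x, ‖rat i x‖ = 1 := by
    intro i x; rw [hrat]; simp only [norm_div, hnorm]; norm_num
  set θ : (Metric.sphere (0:ℂ) 1) → ℝ :=
    fun x => Complex.arg c + ∑ i ∈ Finset.range N, Complex.arg (rat i x) with hθ
  have hHicont : ∀ i, Continuous fun x => (H (u i, x) : ℂ) := fun i =>
    hc.comp (Continuous.prodMk_right (u i))
  have hratcont : ∀ i, Continuous (rat i) := fun i =>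
    (hHicont (i+1)).div (hHicont i) (fun x => hne _)
  have hθcont : Continuous θ := by
    apply continuous_const.add
    apply continuous_finset_sum
    intro i hi
    rw [continuous_iff_continuousAt]
    intro x
    exact (Complex.continuousAt_arg (Complex.mem_slitPlane_iff.mpr
      (Or.inl (hratre i (Finset.mem_range.mp hi) x)))).comp (hratcont i).continuousAt
  -- exp of the partial sums
  have hexp1 : ∀ z : ℂ, ‖z‖ = 1 → Complex.exp (Complex.arg z * Complex.I) = z := by
    intro z hz
    have h := Complex.norm_mul_exp_arg_mul_I z
    rw [hz] at h
    simpa using h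
  have key : ∀ x, ∀ m, m ≤ N →
      Complex.exp ((↑(Complex.arg c + ∑ i ∈ Finset.range m, Complex.arg (rat i x)) : ℂ)
        * Complex.I) = (H (u m, x) : ℂ) := by
    intro x m hm
    induction m with
    | zero =>
      simp only [Finset.range_zero, Finset.sum_empty, add_zero, hu0, h0 x]
      exact hexp1 c (mem_sphere_zero_iff_norm.mp c.2)
    | succ m ih =>
      have ihm := ih (Nat.le_of_succ_le hm)
      rw [Finset.sum_range_succ, ← add_assoc, Complex.ofReal_add, add_mul, Complex.exp_add,
        ihm, hexp1 (rat m x) (hratnorm m x), hrat]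
      rw [mul_comm, div_mul_cancel₀ _ (hne _)]
  have hexpθ : ∀ x, Complex.exp ((θ x : ℂ) * Complex.I) = (x : ℂ) := by
    intro x
    have h := key x N le_rfl
    rw [huN, h1 x] at h
    exact h
  -- wind around the circle and derive a contradiction
  have hmem : ∀ t : ℝ, Complex.exp ((t:ℂ) * Complex.I) ∈ Metric.sphere (0:ℂ) 1 := fun t => by
    rw [mem_sphere_zero_iff_norm, Complex.norm_exp_ofReal_mul_I]
  set e : ℝ → Metric.sphere (0:ℂ) 1 := fun t => ⟨Complex.exp ((t:ℂ) * Complex.I), hmem t⟩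
    with he
  have hecont : Continuous e := Continuous.subtype_mk
    (Complex.continuous_exp.comp (Complex.continuous_ofReal.mul continuous_const)) _
  set g : ℝ → ℝ := fun t => θ (e t) - t with hg
  have hgcont : Continuous g := (hθcont.comp hecont).sub continuous_id
  have hgval : ∀ t, ∃ k : ℤ, g t = 2 * π * k := by
    intro t
    have hone : Complex.exp ((g t : ℂ) * Complex.I) = 1 := by
      have hsplit : ((g t : ℝ) : ℂ) * Complex.I
          = (θ (e t) : ℂ) * Complex.I - (t : ℂ) * Complex.I := by
        rw [hg]; push_cast; ring
      rw [hsplit, Complex.exp_sub, hexpθ (e t)]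
      rw [he]
      exact div_self (Complex.exp_ne_zero _)
    obtain ⟨k, hk⟩ := Complex.exp_eq_one_iff.mp hone
    refine ⟨k, ?_⟩
    have hc' : ((g t : ℝ) : ℂ) = (k : ℂ) * (2 * π) := by
      have hI : ((g t : ℝ) : ℂ) * Complex.I = ((k : ℂ) * (2 * π)) * Complex.I := by
        rw [hk]; ring
      exact mul_right_cancel₀ Complex.I_ne_zero hI
    have : (g t : ℝ) = (k : ℝ) * (2 * π) := by exact_mod_cast hc'
    rw [this]; ring
  obtain ⟨k₀, hk₀⟩ := hgval 0
  have he2π : e (2 * π) = e 0 := by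
    rw [he]
    ext
    show Complex.exp _ = Complex.exp _
    push_cast
    rw [Complex.exp_two_pi_mul_I]
    norm_num
  have hg0 : θ (e 0) = 2 * π * k₀ := by
    have : g 0 = θ (e 0) - 0 := by rw [hg]
    rw [hk₀] at this; linarith
  have hg2π : g (2 * π) = 2 * π * k₀ - 2 * π := by
    rw [hg]; show θ (e (2*π)) - 2*π = _; rw [he2π, hg0]
  have hle : (0:ℝ) ≤ 2 * π := by positivity
  have hv : (2 * π * k₀ - π) ∈ Set.Icc (g (2 * π)) (g 0) := by
    rw [hg2π, hk₀]
    constructor <;> nlinarith [pi_pos]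
  obtain ⟨t, -, ht⟩ := intermediate_value_Icc' hle hgcont.continuousOn hv
  obtain ⟨k, hk⟩ := hgval t
  rw [hk] at ht
  have hπ : π ≠ 0 := ne_of_gt pi_pos
  have h2 : π * (2 * (k:ℝ)) = π * (2 * (k₀:ℝ) - 1) := by linarith
  have h3 : (2 * (k:ℝ)) = 2 * (k₀:ℝ) - 1 := mul_left_cancel₀ hπ h2
  have h4 : (2 * k : ℤ) = 2 * k₀ - 1 := by exact_mod_cast h3
  omega

/-- The simple pendulum cannot be cloned: its phase space `T*S¹ ≅ S¹ × ℝ` admits no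
continuous cloning map homotopic to the identity. -/
theorem simple_pendulum_no_cloning :
    ∀ (N : Type) [TopologicalSpace N]
      (b : (Metric.sphere (0 : ℂ) 1) × ℝ) (r : N)
      (f : (Metric.sphere (0 : ℂ) 1) × ℝ → N)
      (φ : C(((Metric.sphere (0 : ℂ) 1) × ℝ) × ((Metric.sphere (0 : ℂ) 1) × ℝ) × N,
             ((Metric.sphere (0 : ℂ) 1) × ℝ) × ((Metric.sphere (0 : ℂ) 1) × ℝ) × N)),
      φ.Homotopic (ContinuousMap.id _) →
      (∀ x : (Metric.sphere (0 : ℂ) 1) × ℝ, φ (x, b, r) = (x, x, f x)) →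
      False := by
  intro N _ b r f φ hHom hClone
  obtain ⟨F⟩ := hHom
  have hin : Continuous fun q : unitInterval × (Metric.sphere (0:ℂ) 1) =>
      ((unitInterval.symm q.1, ((q.2, (0:ℝ)), b, r)) :
        unitInterval × ((Metric.sphere (0:ℂ) 1) × ℝ) × ((Metric.sphere (0:ℂ) 1) × ℝ) × N) :=
    (unitInterval.continuous_symm.comp continuous_fst).prodMk
      (((continuous_snd.prodMk continuous_const)).prodMk continuous_const)
  have hcont : Continuous fun q : unitInterval × (Metric.sphere (0:ℂ) 1) =>
      (F (unitInterval.symm q.1, ((q.2, (0:ℝ)), b, r))).2.1.1 :=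
    ((F.continuous.comp hin).snd.fst).fst
  set H : C(unitInterval × (Metric.sphere (0:ℂ) 1), Metric.sphere (0:ℂ) 1) :=
    ⟨_, hcont⟩ with hH
  have h0 : ∀ s, H (0, s) = b.1 := by
    intro s
    show (F (unitInterval.symm 0, ((s, (0:ℝ)), b, r))).2.1.1 = b.1
    rw [unitInterval.symm_zero, F.apply_one]
    rfl
  have h1 : ∀ s, H (1, s) = s := by
    intro s
    show (F (unitInterval.symm 1, ((s, (0:ℝ)), b, r))).2.1.1 = s
    rw [unitInterval.symm_one, F.apply_zero, hClone]
  exact no_circle_contraction b.1 H h0 h1
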